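/- Let M be a matroid and ψ: E(M) → Γ a labeling to a linearly ordered abelian group, and let B be a basis. Then there exists a sequence of bases B₀, B₁, …, B_ℓ such that B₀ = B, B_ℓ has minimum label ψ among all bases, and for all i ∈ [ℓ], ψ(B_i) < ψ(B_{i-1}) and |B_i \ B_{i-1}| = 1. -/

import Mathlib

open Set

section Aux

variable {α : Type*} {M : Matroid α} {B B₁ B₂ : Set α} {x : α}

/-- Symmetric exchange: for bases `B₁, B₂` of a finite matroid and `x ∈ B₁ \ B₂`, there is
`y ∈ B₂ \ B₁` such that both `B₁ - x + y` and `B₂ - y + x` are bases. -/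
lemma aux_symm_exchange [M.Finite] (hB₁ : M.IsBase B₁) (hB₂ : M.IsBase B₂) (hx : x ∈ B₁ \ B₂) :
    ∃ y ∈ B₂ \ B₁, M.IsBase (insert y (B₁ \ {x})) ∧ M.IsBase (insert x (B₂ \ {y})) := by
  have hB₂fin : B₂.Finite := M.set_finite B₂ hB₂.subset_ground
  have hxE : x ∈ M.E := hB₁.subset_ground hx.1
  have hxcl : x ∈ M.closure B₂ := by rw [hB₂.closure_eq]; exact hxE
  -- choose a minimal `C ⊆ B₂` with `x ∈ closure C`
  obtain ⟨C, ⟨hCB₂, hxC⟩, hCmin⟩ :=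
    Set.exists_min_image {C | C ⊆ B₂ ∧ x ∈ M.closure C} Set.ncard
      (hB₂fin.finite_subsets.subset (fun C hC => hC.1)) ⟨B₂, Subset.rfl, hxcl⟩
  have hCfin : C.Finite := hB₂fin.subset hCB₂
  have hCEmin : ∀ y ∈ C, x ∉ M.closure (C \ {y}) := by
    intro y hy hcon
    have := hCmin (C \ {y}) ⟨(diff_subset).trans hCB₂, hcon⟩
    have hlt : (C \ {y}).ncard < C.ncard := Set.ncard_diff_singleton_lt_of_mem hy hCfin
    omega
  -- find `y ∈ C` outside the closure of `B₁ \ {x}`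
  have hxndep : x ∉ M.closure (B₁ \ {x}) := hB₁.indep.notMem_closure_diff_of_mem hx.1
  have hex : ∃ y ∈ C, y ∉ M.closure (B₁ \ {x}) := by
    by_contra hcon
    push_neg at hcon
    exact hxndep (M.closure_subset_closure_of_subset_closure (fun y hy => hcon y hy) hxC)
  obtain ⟨y, hyC, hycl⟩ := hex
  have hyB₂ : y ∈ B₂ := hCB₂ hyC
  have hyx : y ≠ x := fun h => hx.2 (h ▸ hyB₂)
  have hyB₁ : y ∉ B₁ := by
    intro hyB₁
    exact hycl (M.subset_closure (B₁ \ {x}) ((diff_subset).trans hB₁.subset_ground)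
      ⟨hyB₁, hyx⟩)
  -- first exchange: `B₁ - x + y` is a base
  have hind : M.Indep (insert y (B₁ \ {x})) := by
    rw [(hB₁.indep.diff {x}).insert_indep_iff_of_notMem (fun h => hyB₁ h.1)]
    exact ⟨hB₂.subset_ground hyB₂, hycl⟩
  have hbase₁ : M.IsBase (insert y (B₁ \ {x})) := by
    rw [insert_diff_singleton_comm hyx]
    exact hB₁.exchange_isBase_of_indep' hx.1 hyB₁
      (by rwa [insert_diff_singleton_comm hyx] at hind)
  -- second exchange: `B₂ - y + x` is spanning, hence a base by cardinality
  have hxninC : x ∉ M.closure (C \ {y}) := hCEmin y hyC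
  have hxinC : x ∈ M.closure (insert y (C \ {y})) := by
    rwa [insert_diff_singleton, insert_eq_of_mem hyC]
  have hyexch : y ∈ M.closure (insert x (C \ {y})) :=
    (Matroid.closure_exchange ⟨hxinC, hxninC⟩).1
  set S := insert x (B₂ \ {y}) with hS
  have hSE : S ⊆ M.E := insert_subset hxE ((diff_subset).trans hB₂.subset_ground)
  have hyS : y ∈ M.closure S :=
    M.closure_subset_closure (insert_subset_insert (diff_subset_diff_left hCB₂)) hyexch
  have hspan : M.E ⊆ M.closure S := by
    have hB₂sub : B₂ ⊆ M.closure S := by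
      intro z hz
      rcases eq_or_ne z y with rfl | hzy
      · exact hyS
      · exact M.subset_closure S hSE (Or.inr ⟨hz, hzy⟩)
    rw [← hB₂.closure_eq]
    exact M.closure_subset_closure_of_subset_closure hB₂sub
  obtain ⟨B₃, hB₃, hB₃S⟩ :=
    ((M.spanning_iff_ground_subset_closure hSE).2 hspan).exists_isBase_subset
  have hxnB₂' : x ∉ B₂ \ {y} := fun h => hx.2 h.1
  have hScard : S.encard = B₂.encard := by
    rw [hS, Set.encard_insert_of_notMem hxnB₂', Set.encard_diff_singleton_add_one hyB₂]
  have hSeq : B₃ = S := by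
    apply Set.Finite.eq_of_subset_of_encard_le (M.set_finite B₃ hB₃.subset_ground) hB₃S
    rw [hScard, hB₂.encard_eq_encard_of_isBase hB₃]
  rw [hSeq] at hB₃
  exact ⟨y, ⟨hyB₂, hyB₁⟩, hbase₁, hB₃⟩

end Aux

section Main

variable {α Γ : Type*} [AddCommGroup Γ] [LinearOrder Γ] [IsOrderedAddMonoid Γ]

lemma aux_finsum_split (ψ : α → Γ) {S : Set α} (hS : S.Finite) {a : α} (ha : a ∈ S) :
    ∑ᶠ e ∈ S, ψ e = ψ a + ∑ᶠ e ∈ S \ {a}, ψ e := by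
  rw [← finsum_mem_insert _ (fun h => h.2 rfl) (hS.diff (t := {a})),
    insert_diff_singleton, insert_eq_of_mem ha]

/-- The key single-exchange step towards a chosen closest minimum-label base. -/
lemma aux_step {M : Matroid α} [M.Finite] (ψ : α → Γ) {B Bm : Set α} (hB : M.IsBase B)
    (hBm : M.IsBase Bm) (hmin : ∀ B'', M.IsBase B'' → (∑ᶠ e ∈ Bm, ψ e) ≤ ∑ᶠ e ∈ B'', ψ e)
    (hBmopt : ∀ B', M.IsBase B' → (∀ B'', M.IsBase B'' → (∑ᶠ e ∈ B', ψ e) ≤ ∑ᶠ e ∈ B'', ψ e) →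
      (B \ Bm).ncard ≤ (B \ B').ncard)
    (hne : B ≠ Bm) :
    ∃ x ∈ B \ Bm, ∃ y ∈ Bm \ B, M.IsBase (insert y (B \ {x})) ∧
      (∑ᶠ e ∈ insert y (B \ {x}), ψ e) < ∑ᶠ e ∈ B, ψ e := by
  have hBfin : B.Finite := M.set_finite B hB.subset_ground
  have hBmfin : Bm.Finite := M.set_finite Bm hBm.subset_ground
  have hxex : (B \ Bm).Nonempty := by
    rw [Set.nonempty_iff_ne_empty]
    intro h
    exact hne (hB.eq_of_subset_isBase hBm (diff_eq_empty.1 h))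
  obtain ⟨x, hx⟩ := hxex
  obtain ⟨y, hy, hbase₁, hbase₂⟩ := aux_symm_exchange hB hBm hx
  refine ⟨x, hx, y, hy, hbase₁, ?_⟩
  -- label computations
  have hsB : ∑ᶠ e ∈ B, ψ e = ψ x + ∑ᶠ e ∈ B \ {x}, ψ e := aux_finsum_split ψ hBfin hx.1
  have hsB' : ∑ᶠ e ∈ insert y (B \ {x}), ψ e = ψ y + ∑ᶠ e ∈ B \ {x}, ψ e :=
    finsum_mem_insert _ (fun h => hy.2 h.1) (hBfin.diff (t := {x}))
  have hsBm : ∑ᶠ e ∈ Bm, ψ e = ψ y + ∑ᶠ e ∈ Bm \ {y}, ψ e := aux_finsum_split ψ hBmfin hy.1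
  have hsBm' : ∑ᶠ e ∈ insert x (Bm \ {y}), ψ e = ψ x + ∑ᶠ e ∈ Bm \ {y}, ψ e :=
    finsum_mem_insert _ (fun h => hx.2 h.1) (hBmfin.diff (t := {y}))
  have hle : (∑ᶠ e ∈ Bm, ψ e) ≤ ∑ᶠ e ∈ insert x (Bm \ {y}), ψ e := hmin _ hbase₂
  have hlt : (∑ᶠ e ∈ Bm, ψ e) < ∑ᶠ e ∈ insert x (Bm \ {y}), ψ e := by
    rcases lt_or_eq_of_le hle with h | h
    · exact h
    · exfalso
      have hBm'min : ∀ B'', M.IsBase B'' →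
          (∑ᶠ e ∈ insert x (Bm \ {y}), ψ e) ≤ ∑ᶠ e ∈ B'', ψ e := by
        intro B'' hB''
        rw [← h]; exact hmin _ hB''
      have hkey := hBmopt _ hbase₂ hBm'min
      have hdiff : B \ insert x (Bm \ {y}) = (B \ Bm) \ {x} := by
        ext z
        simp only [mem_diff, mem_insert_iff, mem_singleton_iff, not_or]
        constructor
        · rintro ⟨hzB, hzx, hzBm⟩
          exact ⟨⟨hzB, fun hzm => hzBm ⟨hzm, fun hzy => hy.2 (hzy ▸ hzB)⟩⟩, hzx⟩
        · rintro ⟨⟨hzB, hzBm⟩, hzx⟩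
          exact ⟨hzB, hzx, fun h => hzBm h.1⟩
      rw [hdiff] at hkey
      have := Set.ncard_diff_singleton_lt_of_mem hx (hBfin.diff (t := Bm))
      omega
  rw [hsBm, hsBm'] at hlt
  have hψ : ψ y < ψ x := lt_of_add_lt_add_right hlt
  rw [hsB, hsB']
  exact add_lt_add_left hψ _

/-- Descent lemma: induction on distance to some minimum-label base. -/
lemma aux_descent {M : Matroid α} [M.Finite] (ψ : α → Γ) :
    ∀ n : ℕ, ∀ B : Set α, M.IsBase B →
    (∃ B₀, M.IsBase B₀ ∧ (∀ B'', M.IsBase B'' → (∑ᶠ e ∈ B₀, ψ e) ≤ ∑ᶠ e ∈ B'', ψ e) ∧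
      (B \ B₀).ncard ≤ n) →
    ∃ (ℓ : ℕ) (Bs : ℕ → Set α),
      Bs 0 = B ∧ (∀ i ≤ ℓ, M.IsBase (Bs i)) ∧
      (∀ B'', M.IsBase B'' → (∑ᶠ e ∈ Bs ℓ, ψ e) ≤ ∑ᶠ e ∈ B'', ψ e) ∧
      (∀ i, 1 ≤ i → i ≤ ℓ →
        (∑ᶠ e ∈ Bs i, ψ e) < (∑ᶠ e ∈ Bs (i - 1), ψ e) ∧
        (Bs i \ Bs (i - 1)).ncard = 1) := by
  intro n
  induction n with
  | zero =>
    rintro B hB ⟨B₀, hB₀, hB₀min, hcard⟩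
    have hBfin : B.Finite := M.set_finite B hB.subset_ground
    have : B \ B₀ = ∅ := by
      rw [← Set.ncard_eq_zero (hBfin.diff (t := B₀))]; omega
    obtain rfl : B = B₀ := hB.eq_of_subset_isBase hB₀ (diff_eq_empty.1 this)
    exact ⟨0, fun _ => B, rfl, fun i _ => hB, hB₀min, fun i h1 h0 => by omega⟩
  | succ n ih =>
    rintro B hB ⟨B₀, hB₀, hB₀min, hcard⟩
    -- choose a minimum-label base closest to `B`
    have hOptfin : {B' | M.IsBase B' ∧
        ∀ B'', M.IsBase B'' → (∑ᶠ e ∈ B', ψ e) ≤ ∑ᶠ e ∈ B'', ψ e}.Finite :=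
      M.ground_finite.finite_subsets.subset (fun X hX => hX.1.subset_ground)
    obtain ⟨Bm, ⟨hBm, hBmmin⟩, hBmopt⟩ :=
      Set.exists_min_image _ (fun X => (B \ X).ncard) hOptfin ⟨B₀, hB₀, hB₀min⟩
    rcases eq_or_ne B Bm with rfl | hne
    · exact ⟨0, fun _ => B, rfl, fun i _ => hB, hBmmin, fun i h1 h0 => by omega⟩
    obtain ⟨x, hx, y, hy, hbase', hlt⟩ :=
      aux_step ψ hB hBm hBmmin (fun B' hB' hmin' => hBmopt B' ⟨hB', hmin'⟩) hne
    have hBfin : B.Finite := M.set_finite B hB.subset_ground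
    -- the exchanged base is strictly closer to `Bm`
    have hdiff : insert y (B \ {x}) \ Bm = (B \ Bm) \ {x} := by
      ext z
      simp only [mem_insert_iff, mem_diff, mem_singleton_iff]
      constructor
      · rintro ⟨rfl | ⟨hzB, hzx⟩, hzBm⟩
        · exact absurd hy.1 hzBm
        · exact ⟨⟨hzB, hzBm⟩, hzx⟩
      · rintro ⟨⟨hzB, hzBm⟩, hzx⟩
        exact ⟨Or.inr ⟨hzB, hzx⟩, hzBm⟩
    have hdB : insert y (B \ {x}) \ B = {y} := by
      ext z
      simp only [mem_insert_iff, mem_diff, mem_singleton_iff]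
      constructor
      · rintro ⟨rfl | ⟨hzB, _⟩, hzB'⟩
        · rfl
        · exact absurd hzB hzB'
      · rintro rfl
        exact ⟨Or.inl rfl, hy.2⟩
    have hcard' : (insert y (B \ {x}) \ Bm).ncard ≤ n := by
      have hle : (B \ Bm).ncard ≤ n + 1 := le_trans (hBmopt B₀ ⟨hB₀, hB₀min⟩) hcard
      have hlt2 : ((B \ Bm) \ {x}).ncard < (B \ Bm).ncard :=
        Set.ncard_diff_singleton_lt_of_mem hx (hBfin.diff (t := Bm))
      rw [hdiff]
      omega
    obtain ⟨ℓ', Bs', hBs0, hBsbase, hBsmin, hBsstep⟩ :=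
      ih (insert y (B \ {x})) hbase' ⟨Bm, hBm, hBmmin, hcard'⟩
    refine ⟨ℓ' + 1, fun i => if i = 0 then B else Bs' (i - 1), rfl, ?_, ?_, ?_⟩
    · intro i hi
      rcases Nat.eq_zero_or_pos i with rfl | hpos
      · exact hB
      · have h0 : i ≠ 0 := by omega
        simp only [h0, if_false]
        exact hBsbase _ (by omega)
    · simp only [Nat.succ_ne_zero, if_false, Nat.add_sub_cancel]
      exact hBsmin
    · intro i h1 hiℓ
      obtain ⟨j, rfl⟩ : ∃ j, i = j + 1 := ⟨i - 1, by omega⟩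
      have hj1 : j + 1 ≠ 0 := by omega
      simp only [hj1, if_false, Nat.add_sub_cancel]
      rcases Nat.eq_zero_or_pos j with rfl | hjpos
      · simp only [if_true, hBs0]
        exact ⟨hlt, by rw [hdB]; exact Set.ncard_singleton y⟩
      · obtain ⟨k, rfl⟩ : ∃ k, j = k + 1 := ⟨j - 1, by omega⟩
        have hjne : k + 1 ≠ 0 := by omega
        simp only [hjne, if_false, Nat.add_sub_cancel]
        have := hBsstep (k + 1) (by omega) (by omega)
        simpa using this

end Main

/-- From any basis `B` there is a sequence of bases, each obtained from the
previous one by a single exchange and with strictly decreasing label, ending at a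
minimum-label basis. -/
theorem stmt_4 {α Γ : Type*} [AddCommGroup Γ] [LinearOrder Γ] [IsOrderedAddMonoid Γ] (M : Matroid α) [M.Finite]
    (ψ : α → Γ) (B : Set α) (hB : M.IsBase B) :
    ∃ (ℓ : ℕ) (Bs : ℕ → Set α),
      Bs 0 = B ∧ (∀ i ≤ ℓ, M.IsBase (Bs i)) ∧
      (∀ B'', M.IsBase B'' → (∑ᶠ e ∈ Bs ℓ, ψ e) ≤ ∑ᶠ e ∈ B'', ψ e) ∧
      (∀ i, 1 ≤ i → i ≤ ℓ →
        (∑ᶠ e ∈ Bs i, ψ e) < (∑ᶠ e ∈ Bs (i - 1), ψ e) ∧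
        (Bs i \ Bs (i - 1)).ncard = 1) := by
  have hfin : {B' | M.IsBase B'}.Finite :=
    M.ground_finite.finite_subsets.subset (fun X hX => hX.subset_ground)
  obtain ⟨B₀, hB₀, hB₀min⟩ :=
    Set.exists_min_image {B' | M.IsBase B'} (fun X => ∑ᶠ e ∈ X, ψ e) hfin ⟨B, hB⟩
  exact aux_descent ψ ((B \ B₀).ncard) B hB ⟨B₀, hB₀, hB₀min, le_rfl⟩
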